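/- Let ε be a real random variable with E[ε²] < ∞ and σ > 0. Let t_1 < … < t_{k−1} be real thresholds and suppose there is an index s with 3 ≤ s ≤ k−1 and t_{s−1} ≤ 0. Let μ_2, …, μ_{s−1} be real numbers with μ_j ∈ (t_{j−1}, t_j] for every 2 ≤ j ≤ s−1, and set C_k(t) = max_{2≤j≤k−1}(t_j − t_{j−1}). Then Σ_{j=2}^{s−1} μ_j² P(σε ∈ R_j(t)) ≥ (σ²/2) E[ε² · 1(t_1 < σε ≤ t_{s−1})] − C_k(t)². -/

import Mathlib

open MeasureTheory Finset

noncomputable section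

/-- Quantization cells: `R_1 = (-∞, t_1]`, `R_j = (t_{j-1}, t_j]` for `2 ≤ j ≤ k-1`,
`R_k = (t_{k-1}, ∞)`. -/
def cell (k : ℕ) (t : ℕ → ℝ) (j : ℕ) : Set ℝ :=
  if j = 1 then Set.Iic (t 1)
  else if j = k then Set.Ioi (t (k - 1))
  else Set.Ioc (t (j - 1)) (t j)

lemma union_Ioc_aux (t : ℕ → ℝ) (k : ℕ) (hM : MonotoneOn t (Set.Icc 1 (k - 1))) :
    ∀ m, 2 ≤ m → m ≤ k - 1 →
      (⋃ j ∈ Finset.Icc 2 m, Set.Ioc (t (j - 1)) (t j)) = Set.Ioc (t 1) (t m) := by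
  intro m
  induction m with
  | zero => omega
  | succ n ih =>
    intro h2 hk
    rcases Nat.lt_or_ge 2 (n + 1) with hlt | hle
    · have hn2 : 2 ≤ n := by omega
      have hicc : Finset.Icc 2 (n + 1) = insert (n + 1) (Finset.Icc 2 n) := by
        ext x; simp only [Finset.mem_Icc, Finset.mem_insert]; omega
      rw [hicc, Finset.set_biUnion_insert, ih hn2 (by omega)]
      have h1n : t 1 ≤ t n := hM ⟨le_refl _, by omega⟩ ⟨by omega, by omega⟩ (by omega)
      have hnn : t n ≤ t (n + 1) := by
        have := hM (show n ∈ Set.Icc 1 (k-1) from ⟨by omega, by omega⟩)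
          (show n + 1 ∈ Set.Icc 1 (k-1) from ⟨by omega, by omega⟩) (by omega)
        simpa using this
      rw [Set.union_comm]
      have : (n + 1) - 1 = n := by omega
      rw [this, Set.Ioc_union_Ioc_eq_Ioc h1n hnn]
    · have hn1 : n = 1 := by omega
      subst hn1
      simp

/-- Lower bound step in the proof of Proposition 1:
`∑_{j=2}^{s-1} μ_j² P(σε ∈ R_j(t)) ≥ (σ²/2) E[ε² 1(t_1 < σε ≤ t_{s-1})] - C_k(t)²`. -/
theorem quantized_noise_variance_lower_bound
    {Ω : Type*} [MeasurableSpace Ω] (P : Measure Ω) [IsProbabilityMeasure P]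
    (ε : Ω → ℝ) (hmeas : Measurable ε)
    (hint : Integrable (fun ω => (ε ω) ^ 2) P)
    (σ : ℝ) (hσ : 0 < σ)
    (k : ℕ) (t : ℕ → ℝ) (ht : StrictMonoOn t (Set.Icc 1 (k - 1)))
    (s : ℕ) (hs3 : 3 ≤ s) (hsk : s ≤ k - 1) (hts : t (s - 1) ≤ 0)
    (μ : ℕ → ℝ) (hμ : ∀ j, 2 ≤ j → j ≤ s - 1 → μ j ∈ Set.Ioc (t (j - 1)) (t j))
    (Ck : ℝ)
    (hCk : IsGreatest ((fun j => t j - t (j - 1)) '' Set.Icc 2 (k - 1)) Ck) :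
    (σ ^ 2 / 2) * (∫ ω in {ω | σ * ε ω ∈ Set.Ioc (t 1) (t (s - 1))}, (ε ω) ^ 2 ∂P)
        - Ck ^ 2 ≤
      ∑ j ∈ Finset.Icc 2 (s - 1), (μ j) ^ 2 * (P {ω | σ * ε ω ∈ cell k t j}).toReal := by
  have hk4 : 4 ≤ k := by omega
  have hM : MonotoneOn t (Set.Icc 1 (k - 1)) := ht.monotoneOn
  set f : Ω → ℝ := fun ω => σ * ε ω with hf
  have hfmeas : Measurable f := measurable_const.mul hmeas
  set A : ℕ → Set Ω := fun j => f ⁻¹' Set.Ioc (t (j - 1)) (t j) with hA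
  have hmeasA : ∀ j, MeasurableSet (A j) := fun j => hfmeas measurableSet_Ioc
  -- Ck ≥ 0
  have hCk0 : 0 ≤ Ck := by
    have h12 : t 1 < t 2 := ht ⟨le_refl _, by omega⟩ ⟨by omega, by omega⟩ (by omega)
    have := hCk.2 ⟨2, ⟨le_refl _, by omega⟩, rfl⟩
    simp only at this
    have h21 : (2 : ℕ) - 1 = 1 := rfl
    rw [h21] at this
    linarith
  -- cells agree with A on the index range
  have hcell : ∀ j ∈ Finset.Icc 2 (s - 1), {ω | σ * ε ω ∈ cell k t j} = A j := by
    intro j hj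
    simp only [Finset.mem_Icc] at hj
    have h1 : j ≠ 1 := by omega
    have h2 : j ≠ k := by omega
    simp only [cell, h1, h2, if_false, hA]
    rfl
  -- pointwise bound
  have key : ∀ j ∈ Finset.Icc 2 (s - 1), ∀ ω ∈ A j,
      (σ ^ 2 / 2) * (ε ω) ^ 2 - Ck ^ 2 ≤ (μ j) ^ 2 := by
    intro j hj ω hω
    simp only [Finset.mem_Icc] at hj
    obtain ⟨hx1, hx2⟩ := hω
    obtain ⟨hμ1, hμ2⟩ := hμ j hj.1 hj.2
    have hjk : j ≤ k - 1 := by omega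
    have hgap : t j - t (j - 1) ≤ Ck := hCk.2 ⟨j, ⟨hj.1, hjk⟩, rfl⟩
    have h2 : f ω - μ j ≤ Ck := by
      simp only [hf] at hx1 hx2 ⊢; linarith
    have h3 : -Ck ≤ f ω - μ j := by
      simp only [hf] at hx1 hx2 ⊢; linarith
    have h1 : (f ω - μ j) ^ 2 ≤ Ck ^ 2 := sq_le_sq' h3 h2
    have hx : σ ^ 2 * (ε ω) ^ 2 = (f ω) ^ 2 := by simp only [hf]; ring
    nlinarith [sq_nonneg (f ω - 2 * μ j)]
  -- integral step per j
  have hintOn : ∀ (S : Set Ω), IntegrableOn (fun ω => (σ ^ 2 / 2) * (ε ω) ^ 2 - Ck ^ 2) S P :=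
    fun S => ((hint.const_mul _).sub (integrable_const _)).integrableOn
  have step : ∀ j ∈ Finset.Icc 2 (s - 1),
      (σ ^ 2 / 2) * (∫ ω in A j, (ε ω) ^ 2 ∂P) - Ck ^ 2 * (P (A j)).toReal
        ≤ (μ j) ^ 2 * (P (A j)).toReal := by
    intro j hj
    have hmono := setIntegral_mono_on (hintOn (A j))
      (integrableOn_const (measure_ne_top _ _)) (hmeasA j) (key j hj)
    rw [setIntegral_const, smul_eq_mul] at hmono
    rw [integral_sub ((hint.const_mul _).integrableOn)
      (integrableOn_const (measure_ne_top _ _)), integral_const_mul,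
      setIntegral_const, smul_eq_mul, measureReal_def] at hmono
    linarith
  -- disjointness
  have key2 : ∀ i j, 2 ≤ i → i < j → j ≤ s - 1 → Disjoint (A i) (A j) := by
    intro i j hi hij hj
    apply Set.disjoint_left.2
    rintro ω ⟨_, hxi⟩ ⟨hxj, _⟩
    have : t i ≤ t (j - 1) := hM ⟨by omega, by omega⟩ ⟨by omega, by omega⟩ (by omega)
    exact absurd (lt_of_le_of_lt (hxi.trans this) hxj) (lt_irrefl _)
  have hdisj : Set.Pairwise (↑(Finset.Icc 2 (s - 1))) (Function.onFun Disjoint A) := by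
    intro i hi j hj hij
    simp only [Finset.coe_Icc, Set.mem_Icc] at hi hj
    rcases lt_or_gt_of_ne hij with h | h
    · exact key2 i j hi.1 h hj.2
    · exact (key2 j i hj.1 h hi.2).symm
  -- union identity
  have hUnion : (⋃ j ∈ Finset.Icc 2 (s - 1), Set.Ioc (t (j - 1)) (t j))
      = Set.Ioc (t 1) (t (s - 1)) := union_Ioc_aux t k hM (s - 1) (by omega) (by omega)
  have hU : (⋃ j ∈ Finset.Icc 2 (s - 1), A j) = {ω | σ * ε ω ∈ Set.Ioc (t 1) (t (s - 1))} := by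
    simp only [hA, ← Set.preimage_iUnion₂]
    rw [hUnion]
    rfl
  -- integral over the union
  have hIsum : ∑ j ∈ Finset.Icc 2 (s - 1), ∫ ω in A j, (ε ω) ^ 2 ∂P
      = ∫ ω in {ω | σ * ε ω ∈ Set.Ioc (t 1) (t (s - 1))}, (ε ω) ^ 2 ∂P := by
    rw [← hU, integral_biUnion_finset _ (fun i _ => hmeasA i) hdisj
      (fun i _ => hint.integrableOn)]
  -- measure sum
  have hPsum : ∑ j ∈ Finset.Icc 2 (s - 1), (P (A j)).toReal ≤ 1 := by
    rw [← ENNReal.toReal_sum (fun a _ => measure_ne_top _ _),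
      ← measure_biUnion_finset hdisj (fun i _ => hmeasA i)]
    exact ENNReal.toReal_le_of_le_ofReal zero_le_one (by simpa using prob_le_one)
  calc (σ ^ 2 / 2) * (∫ ω in {ω | σ * ε ω ∈ Set.Ioc (t 1) (t (s - 1))}, (ε ω) ^ 2 ∂P)
        - Ck ^ 2
      ≤ (σ ^ 2 / 2) * (∫ ω in {ω | σ * ε ω ∈ Set.Ioc (t 1) (t (s - 1))}, (ε ω) ^ 2 ∂P)
        - Ck ^ 2 * ∑ j ∈ Finset.Icc 2 (s - 1), (P (A j)).toReal := by
        nlinarith [sq_nonneg Ck]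
    _ = ∑ j ∈ Finset.Icc 2 (s - 1),
        ((σ ^ 2 / 2) * (∫ ω in A j, (ε ω) ^ 2 ∂P) - Ck ^ 2 * (P (A j)).toReal) := by
        rw [Finset.sum_sub_distrib, ← Finset.mul_sum, ← Finset.mul_sum, hIsum]
    _ ≤ ∑ j ∈ Finset.Icc 2 (s - 1), (μ j) ^ 2 * (P (A j)).toReal :=
        Finset.sum_le_sum step
    _ = ∑ j ∈ Finset.Icc 2 (s - 1), (μ j) ^ 2 * (P {ω | σ * ε ω ∈ cell k t j}).toReal := by
        exact Finset.sum_congr rfl fun j hj => by rw [hcell j hj]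

end
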